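/- For 1/2 < μ < 2/3, every t ∈ ℝ and every unit vector e ∈ ℝⁿ (n ≥ 2), the weight ⟨x + e t⟩^{4μ−2} ⟨x − e t⟩^{2μ} belongs to A₂(ℝⁿ) with A₂ constant bounded independently of t. -/

import Mathlib

open MeasureTheory

open Metric Set Real Filter
open scoped ENNReal NNReal

section A2Aux

variable {n : ℕ}

local notation "E" => EuclideanSpace ℝ (Fin n)

private lemma contW (z : E) (α : ℝ) : Continuous fun y : E => (1 + ‖y - z‖^2) ^ α :=
  (continuous_const.add ((continuous_id.sub continuous_const).norm.pow 2)).rpow_const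
    (fun y => Or.inl (show (1:ℝ) + ‖y - z‖^2 ≠ 0 by positivity))

private lemma intOnBall {f : E → ℝ} (hf : Continuous f) (x : E) (r : ℝ) :
    IntegrableOn f (ball x r) volume :=
  (hf.continuousOn.integrableOn_compact (isCompact_closedBall x r)).mono_set
    ball_subset_closedBall

private lemma avg_nonneg' {f : E → ℝ} (hf : ∀ y, 0 ≤ f y) (x : E) (r : ℝ) :
    0 ≤ ⨍ y in ball x r, f y := by
  rw [setAverage_eq]
  exact smul_nonneg (by positivity) (setIntegral_nonneg measurableSet_ball fun y _ => hf y)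

private lemma avg_le_of_le {f : E → ℝ} {x : E} {r M : ℝ} (hr : 0 < r)
    (hf : IntegrableOn f (ball x r) volume) (hM : ∀ y ∈ ball x r, f y ≤ M) :
    ⨍ y in ball x r, f y ≤ M := by
  have h0 : (volume (ball x r)).toReal ≠ 0 :=
    (ENNReal.toReal_pos (measure_ball_pos volume x hr).ne' measure_ball_lt_top.ne).ne'
  rw [setAverage_eq, smul_eq_mul]
  have hint : ∫ y in ball x r, f y ≤ ∫ _y in ball x r, M :=
    setIntegral_mono_on hf (integrableOn_const measure_ball_lt_top.ne)
      measurableSet_ball hM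
  rw [setIntegral_const, smul_eq_mul, measureReal_def] at hint
  calc (volume (ball x r)).toReal⁻¹ * ∫ y in ball x r, f y
      ≤ (volume (ball x r)).toReal⁻¹ * ((volume (ball x r)).toReal * M) := by
        gcongr
    _ = M := by field_simp

private lemma avg_translate (F : E → ℝ) (z x : E) (r : ℝ) :
    ⨍ y in ball x r, F (y - z) = ⨍ y in ball (x - z) r, F y := by
  have hmp : MeasurePreserving (fun y : E => y - z) volume volume :=
    measurePreserving_sub_right volume z
  have hemb : MeasurableEmbedding (fun y : E => y - z) :=
    (MeasurableEquiv.subRight z).measurableEmbedding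
  have hpre : (fun y : E => y - z) ⁻¹' ball (x - z) r = ball x r := by
    ext y
    simp [mem_ball, dist_eq_norm, sub_sub_sub_cancel_right]
  rw [setAverage_eq, setAverage_eq, ← hmp.setIntegral_preimage_emb hemb F (ball (x - z) r), hpre,
    measureReal_def, measureReal_def, Measure.addHaar_ball_center volume x, Measure.addHaar_ball_center volume (x - z)]

private lemma memLp_cont {f : E → ℝ} (hf : Continuous f) (x : E) (r : ℝ) (p : ℝ≥0∞) :
    MemLp f p (volume.restrict (ball x r)) := by
  haveI : IsFiniteMeasure (volume.restrict (ball x r)) :=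
    ⟨by rw [Measure.restrict_apply_univ]; exact measure_ball_lt_top⟩
  obtain ⟨C, hC⟩ := (isCompact_closedBall x r).exists_bound_of_continuousOn hf.continuousOn
  exact MemLp.of_bound hf.aestronglyMeasurable.restrict C
    ((ae_restrict_iff' measurableSet_ball).2 (Eventually.of_forall fun y hy =>
      hC y (ball_subset_closedBall hy)))

private lemma avg_holder {x : E} {r : ℝ} (hr : 0 < r) {f g : E → ℝ}
    (hf : Continuous f) (hg : Continuous g) (hf0 : ∀ y, 0 ≤ f y) (hg0 : ∀ y, 0 ≤ g y)
    {θ : ℝ} (hθ0 : 0 < θ) (hθ1 : θ < 1) :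
    ⨍ y in ball x r, (f y) ^ θ * (g y) ^ (1 - θ) ≤
      (⨍ y in ball x r, f y) ^ θ * (⨍ y in ball x r, g y) ^ (1 - θ) := by
  have h1θ : 0 < 1 - θ := by linarith
  have hpq : (1/θ).HolderConjugate (1/(1-θ)) := by
    rw [Real.holderConjugate_iff]; constructor
    · exact (one_lt_one_div hθ0 hθ1)
    · rw [one_div, one_div, inv_inv, inv_inv]; ring
  have key := integral_mul_le_Lp_mul_Lq_of_nonneg (μ := volume.restrict (ball x r)) hpq
    (f := fun y => f y ^ θ) (g := fun y => g y ^ (1 - θ))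
    (Eventually.of_forall fun y => rpow_nonneg (hf0 y) _)
    (Eventually.of_forall fun y => rpow_nonneg (hg0 y) _)
    (memLp_cont (hf.rpow_const fun y => Or.inr hθ0.le) x r _)
    (memLp_cont (hg.rpow_const fun y => Or.inr h1θ.le) x r _)
  have ef : ∀ y : E, (f y ^ θ) ^ (1/θ) = f y := fun y => by
    rw [← Real.rpow_mul (hf0 y), mul_one_div_cancel hθ0.ne', Real.rpow_one]
  have eg : ∀ y : E, (g y ^ (1-θ)) ^ (1/(1-θ)) = g y := fun y => by
    rw [← Real.rpow_mul (hg0 y), mul_one_div_cancel h1θ.ne', Real.rpow_one]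
  simp only [ef, eg, one_div_one_div] at key
  set V := (volume (ball x r)).toReal with hVdef
  have hV : 0 < V :=
    ENNReal.toReal_pos (measure_ball_pos volume x hr).ne' measure_ball_lt_top.ne
  have hif : 0 ≤ ∫ y in ball x r, f y :=
    setIntegral_nonneg measurableSet_ball fun y _ => hf0 y
  have hig : 0 ≤ ∫ y in ball x r, g y :=
    setIntegral_nonneg measurableSet_ball fun y _ => hg0 y
  rw [setAverage_eq, setAverage_eq, setAverage_eq, smul_eq_mul, smul_eq_mul, smul_eq_mul]
  calc V⁻¹ * ∫ y in ball x r, f y ^ θ * g y ^ (1-θ)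
      ≤ V⁻¹ * ((∫ y in ball x r, f y) ^ θ * (∫ y in ball x r, g y) ^ (1-θ)) := by
        gcongr
    _ = (V⁻¹ * ∫ y in ball x r, f y) ^ θ * (V⁻¹ * ∫ y in ball x r, g y) ^ (1-θ) := by
        have h2 : (V⁻¹ * ∫ y in ball x r, f y) ^ θ * (V⁻¹ * ∫ y in ball x r, g y) ^ (1-θ)
            = (V⁻¹ ^ θ * V⁻¹ ^ (1-θ)) *
              ((∫ y in ball x r, f y) ^ θ * (∫ y in ball x r, g y) ^ (1-θ)) := by
          rw [Real.mul_rpow (by positivity) hif, Real.mul_rpow (by positivity) hig]; ring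
        rw [h2, ← Real.rpow_add (by positivity), show θ + (1-θ) = (1:ℝ) by ring,
          Real.rpow_one]


private lemma nontrivE (hn : 2 ≤ n) : Nontrivial E := by
  haveI : Nonempty (Fin n) := ⟨⟨0, by omega⟩⟩
  infer_instance

private lemma integral_ball_inv_bound (hn : 2 ≤ n) {s : ℝ} (hs0 : 0 < s) (hsn : s < n)
    {R : ℝ} (hR : 0 < R) :
    ∫ y in ball (0:E) R, (1 + ‖y‖^2) ^ (-(s/2)) ≤
      (n : ℝ) * (volume (ball (0:E) 1)).toReal * (R ^ ((n:ℝ) - s) / ((n:ℝ) - s)) := by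
  haveI := nontrivE (n := n) hn
  set c := (volume (ball (0:E) 1)).toReal with hc
  have hc0 : 0 ≤ c := ENNReal.toReal_nonneg
  set g : ℝ → ℝ := fun t => (1 + t^2) ^ (-(s/2)) with hg
  set f : ℝ → ℝ := (Iio R).indicator g with hf
  have step1 : ∫ y in ball (0:E) R, (1 + ‖y‖^2) ^ (-(s/2)) = ∫ y : E, f ‖y‖ := by
    rw [← integral_indicator measurableSet_ball]
    congr 1
    funext y
    by_cases h : ‖y‖ < R <;>
      simp [hf, hg, Set.indicator_apply, mem_ball_zero_iff, h]
  have step2 : ∫ y : E, f ‖y‖ =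
      (n : ℝ) * (c * ∫ t in Ioi (0:ℝ), t ^ (n - 1) • f t) := by
    have h := MeasureTheory.integral_fun_norm_addHaar (volume : Measure E) f
    simp only [finrank_euclideanSpace_fin, nsmul_eq_mul, smul_eq_mul] at h
    exact h
  have step3 : ∫ t in Ioi (0:ℝ), t ^ (n - 1) • f t
      = ∫ t in Ioo (0:ℝ) R, t ^ (n - 1) * g t := by
    simp only [smul_eq_mul]
    have h : ∀ t : ℝ, t ^ (n-1) * f t = (Iio R).indicator (fun t => t ^ (n-1) * g t) t := by
      intro t
      by_cases h : t ∈ Iio R <;> simp [hf, Set.indicator_apply, h]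
    simp only [h]
    rw [setIntegral_indicator measurableSet_Iio, Set.Ioi_inter_Iio]
  have step4 : ∫ t in Ioo (0:ℝ) R, t ^ (n - 1) * g t
      ≤ ∫ t in Ioo (0:ℝ) R, t ^ ((n:ℝ) - 1 - s) := by
    have hcont : Continuous fun t : ℝ => t ^ (n-1) * g t := by
      apply (continuous_pow _).mul
      exact (continuous_const.add (continuous_id.pow 2)).rpow_const
        (fun t => Or.inl (show (1:ℝ) + t^2 ≠ 0 by positivity))
    have hint1 : IntegrableOn (fun t : ℝ => t ^ (n-1) * g t) (Ioo 0 R) volume :=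
      (hcont.continuousOn.integrableOn_compact isCompact_Icc).mono_set
        Ioo_subset_Icc_self
    have hint2 : IntegrableOn (fun t : ℝ => t ^ ((n:ℝ) - 1 - s)) (Ioo 0 R) volume := by
      have := intervalIntegral.intervalIntegrable_rpow' (a := 0) (b := R)
        (show (-1:ℝ) < (n:ℝ) - 1 - s by
          have : (2:ℝ) ≤ n := by exact_mod_cast hn
          linarith)
      rw [intervalIntegrable_iff_integrableOn_Ioc_of_le hR.le] at this
      exact this.mono_set Ioo_subset_Ioc_self
    refine setIntegral_mono_on hint1 hint2 measurableSet_Ioo ?_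
    intro t ht
    obtain ⟨ht0, htR⟩ := ht
    have h1 : g t ≤ t ^ (-s) := by
      have e1 : ((t^2 : ℝ)) ^ (-(s/2)) = t ^ (-s) := by
        rw [← Real.rpow_natCast t 2, ← Real.rpow_mul ht0.le]
        congr 1
        ring
      rw [hg, ← e1]
      exact Real.rpow_le_rpow_of_nonpos (by positivity) (by linarith [sq_nonneg t])
        (by linarith)
    have h2 : t ^ ((n:ℝ) - 1 - s) = t ^ (n-1) * t ^ (-s) := by
      rw [← Real.rpow_natCast t (n-1), ← Real.rpow_add ht0]
      congr 1
      rw [Nat.cast_sub (by omega : 1 ≤ n)]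
      push_cast
      ring
    rw [h2]
    exact mul_le_mul_of_nonneg_left h1 (by positivity)
  have step5 : ∫ t in Ioo (0:ℝ) R, t ^ ((n:ℝ) - 1 - s) = R ^ ((n:ℝ) - s) / ((n:ℝ) - s) := by
    have h2n : (2:ℝ) ≤ n := by exact_mod_cast hn
    rw [← integral_Ioc_eq_integral_Ioo, ← intervalIntegral.integral_of_le hR.le,
      integral_rpow (Or.inl (by linarith)),
      show (n:ℝ) - 1 - s + 1 = (n:ℝ) - s by ring,
      Real.zero_rpow (by linarith : (n:ℝ) - s ≠ 0)]
    ring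
  calc ∫ y in ball (0:E) R, (1 + ‖y‖^2) ^ (-(s/2))
      = (n : ℝ) * (c * ∫ t in Ioo (0:ℝ) R, t ^ (n - 1) * g t) := by
        rw [step1, step2, step3]
    _ ≤ (n : ℝ) * (c * (R ^ ((n:ℝ) - s) / ((n:ℝ) - s))) := by
        have : (∫ t in Ioo (0:ℝ) R, t ^ (n - 1) * g t) ≤ R ^ ((n:ℝ) - s) / ((n:ℝ) - s) :=
          step5 ▸ step4
        gcongr
    _ = (n : ℝ) * c * (R ^ ((n:ℝ) - s) / ((n:ℝ) - s)) := by ring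


private lemma core0 (hn : 2 ≤ n) {s : ℝ} (hs0 : 0 < s) (hsn : s < n) (x : E) {r : ℝ}
    (hr : 0 < r) :
    (⨍ y in ball x r, (1 + ‖y‖^2) ^ (s/2)) * (⨍ y in ball x r, (1 + ‖y‖^2) ^ (-(s/2)))
      ≤ max ((4:ℝ)^s) ((13:ℝ)^(s/2) * ((n:ℝ) * (3:ℝ)^((n:ℝ)-s) / ((n:ℝ)-s))) := by
  haveI := nontrivE (n := n) hn
  have h2n : (2:ℝ) ≤ n := by exact_mod_cast hn
  have hns : (0:ℝ) < (n:ℝ) - s := by linarith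
  have wc : Continuous fun y : E => (1 + ‖y‖^2) ^ (s/2) := by
    simpa using contW (0:E) (s/2)
  have wc' : Continuous fun y : E => (1 + ‖y‖^2) ^ (-(s/2)) := by
    simpa using contW (0:E) (-(s/2))
  have hA0 : 0 ≤ ⨍ y in ball x r, (1 + ‖y‖^2) ^ (s/2) :=
    avg_nonneg' (fun y => by positivity) x r
  have hB0 : 0 ≤ ⨍ y in ball x r, (1 + ‖y‖^2) ^ (-(s/2)) :=
    avg_nonneg' (fun y => by positivity) x r
  have tri1 : ∀ y : E, ‖y‖ ≤ ‖x‖ + ‖y - x‖ := fun y => by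
    have := norm_add_le (y - x) x
    simp only [sub_add_cancel] at this
    linarith
  have tri2 : ∀ y : E, ‖x‖ ≤ ‖y‖ + ‖y - x‖ := fun y => by
    have := norm_add_le (x - y) y
    simp only [sub_add_cancel] at this
    have e : ‖x - y‖ = ‖y - x‖ := norm_sub_rev x y
    linarith
  by_cases hcase : 1 + ‖x‖^2 ≤ 4*r^2
  · -- large ball case
    set c := (volume (ball (0:E) 1)).toReal with hc
    have hc0 : 0 < c :=
      ENNReal.toReal_pos (measure_ball_pos volume _ one_pos).ne' measure_ball_lt_top.ne
    have hA : (⨍ y in ball x r, (1 + ‖y‖^2) ^ (s/2)) ≤ (13:ℝ)^(s/2) * r^s := by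
      have e1 : ((13:ℝ) * r^2)^(s/2) = 13^(s/2) * r^s := by
        rw [Real.mul_rpow (by norm_num) (by positivity), ← Real.rpow_natCast r 2,
          ← Real.rpow_mul hr.le]
        norm_num
        left
        congr 1
        ring
      rw [← e1]
      refine avg_le_of_le hr (intOnBall wc x r) ?_
      intro y hy
      rw [mem_ball, dist_eq_norm] at hy
      refine Real.rpow_le_rpow (by positivity) ?_ (by positivity)
      nlinarith [tri1 y, norm_nonneg x, norm_nonneg (y - x), norm_nonneg y,
        sq_nonneg (‖x‖ - 2*r), sq_nonneg (‖y - x‖ - r)]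
    have hsub : ball x r ⊆ ball (0:E) (3*r) := by
      intro y hy
      rw [mem_ball, dist_eq_norm] at hy
      rw [mem_ball_zero_iff]
      nlinarith [tri1 y, norm_nonneg x, norm_nonneg (y - x), norm_nonneg y,
        sq_nonneg (‖x‖ - 2*r)]
    have hB : (⨍ y in ball x r, (1 + ‖y‖^2) ^ (-(s/2)))
        ≤ ((n:ℝ) * (3:ℝ)^((n:ℝ)-s) / ((n:ℝ)-s)) * r^(-s) := by
      have hVeq : (volume (ball x r)).toReal = r^((n:ℝ)) * c := by
        rw [Measure.addHaar_ball volume x hr.le, ENNReal.toReal_mul,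
          ENNReal.toReal_ofReal (by positivity), finrank_euclideanSpace_fin,
          Real.rpow_natCast]
      have hmono : ∫ y in ball x r, (1 + ‖y‖^2) ^ (-(s/2))
          ≤ ∫ y in ball (0:E) (3*r), (1 + ‖y‖^2) ^ (-(s/2)) :=
        setIntegral_mono_set (intOnBall wc' 0 (3*r))
          (Eventually.of_forall fun y => by positivity)
          (HasSubset.Subset.eventuallyLE hsub)
      have hbound := integral_ball_inv_bound (n := n) hn hs0 hsn
        (R := 3*r) (by positivity)
      rw [setAverage_eq, smul_eq_mul, measureReal_def, hVeq]
      have e2 : ((3:ℝ)*r)^((n:ℝ)-s) = 3^((n:ℝ)-s) * r^((n:ℝ)-s) :=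
        Real.mul_rpow (by norm_num) hr.le
      have e3 : r^((n:ℝ)-s) * (r^((n:ℝ)))⁻¹ = r^(-s) := by
        rw [← Real.rpow_neg hr.le, ← Real.rpow_add hr]
        congr 1
        ring
      calc (r^((n:ℝ)) * c)⁻¹ * ∫ y in ball x r, (1 + ‖y‖^2) ^ (-(s/2))
          ≤ (r^((n:ℝ)) * c)⁻¹ *
            ((n : ℝ) * c * (((3:ℝ)*r) ^ ((n:ℝ) - s) / ((n:ℝ) - s))) := by
            have hrN : (0:ℝ) < r^((n:ℝ)) := Real.rpow_pos_of_pos hr _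
            gcongr
            exact hmono.trans hbound
        _ = ((n:ℝ) * (3:ℝ)^((n:ℝ)-s) / ((n:ℝ)-s)) * (r^((n:ℝ)-s) * (r^((n:ℝ)))⁻¹) := by
            rw [e2]
            have hrN : (0:ℝ) < r^((n:ℝ)) := Real.rpow_pos_of_pos hr _
            field_simp
        _ = ((n:ℝ) * (3:ℝ)^((n:ℝ)-s) / ((n:ℝ)-s)) * r^(-s) := by rw [e3]
    calc (⨍ y in ball x r, (1 + ‖y‖^2) ^ (s/2)) * (⨍ y in ball x r, (1 + ‖y‖^2) ^ (-(s/2)))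
        ≤ ((13:ℝ)^(s/2) * r^s) * (((n:ℝ) * (3:ℝ)^((n:ℝ)-s) / ((n:ℝ)-s)) * r^(-s)) :=
          mul_le_mul hA hB hB0 (by positivity)
      _ = (13:ℝ)^(s/2) * ((n:ℝ) * (3:ℝ)^((n:ℝ)-s) / ((n:ℝ)-s)) * (r^s * r^(-s)) := by ring
      _ = (13:ℝ)^(s/2) * ((n:ℝ) * (3:ℝ)^((n:ℝ)-s) / ((n:ℝ)-s)) := by
          rw [← Real.rpow_add hr]
          simp
      _ ≤ _ := le_max_right _ _
  · -- small ball case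
    push_neg at hcase
    have hG : (0:ℝ) < 1 + ‖x‖^2 := by positivity
    have hA : (⨍ y in ball x r, (1 + ‖y‖^2) ^ (s/2)) ≤ (4*(1 + ‖x‖^2))^(s/2) := by
      refine avg_le_of_le hr (intOnBall wc x r) ?_
      intro y hy
      rw [mem_ball, dist_eq_norm] at hy
      refine Real.rpow_le_rpow (by positivity) ?_ (by positivity)
      nlinarith [tri1 y, norm_nonneg x, norm_nonneg (y - x), norm_nonneg y,
        sq_nonneg (‖x‖ - ‖y - x‖)]
    have hB : (⨍ y in ball x r, (1 + ‖y‖^2) ^ (-(s/2)))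
        ≤ ((1 + ‖x‖^2)/4)^(-(s/2)) := by
      refine avg_le_of_le hr (intOnBall wc' x r) ?_
      intro y hy
      rw [mem_ball, dist_eq_norm] at hy
      refine Real.rpow_le_rpow_of_nonpos (by positivity) ?_ (by linarith)
      nlinarith [tri2 y, norm_nonneg x, norm_nonneg (y - x), norm_nonneg y,
        sq_nonneg (‖y‖ - ‖y - x‖)]
    calc (⨍ y in ball x r, (1 + ‖y‖^2) ^ (s/2)) * (⨍ y in ball x r, (1 + ‖y‖^2) ^ (-(s/2)))
        ≤ (4*(1 + ‖x‖^2))^(s/2) * ((1 + ‖x‖^2)/4)^(-(s/2)) :=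
          mul_le_mul hA hB hB0 (by positivity)
      _ = (4:ℝ)^s := by
          rw [Real.rpow_neg (by positivity), ← div_eq_mul_inv,
            ← Real.div_rpow (by positivity) (by positivity)]
          rw [show (4*(1 + ‖x‖^2)) / ((1 + ‖x‖^2)/4) = (16:ℝ) by
            field_simp
            ring]
          rw [show (16:ℝ) = (4:ℝ)^(2:ℝ) by
            rw [show (2:ℝ) = ((2:ℕ):ℝ) by norm_num, Real.rpow_natCast]
            norm_num]
          rw [← Real.rpow_mul (by norm_num)]
          congr 1
          ring
      _ ≤ _ := le_max_left _ _

private lemma core (hn : 2 ≤ n) {s : ℝ} (hs0 : 0 < s) (hsn : s < n) :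
    ∃ C : ℝ, 1 ≤ C ∧ ∀ (z x : E) (r : ℝ), 0 < r →
      (⨍ y in ball x r, (1 + ‖y - z‖^2) ^ (s/2)) *
        (⨍ y in ball x r, (1 + ‖y - z‖^2) ^ (-(s/2))) ≤ C := by
  refine ⟨max (max ((4:ℝ)^s) ((13:ℝ)^(s/2) * ((n:ℝ) * (3:ℝ)^((n:ℝ)-s) / ((n:ℝ)-s)))) 1,
    le_max_right _ _, fun z x r hr => ?_⟩
  have h1 : (⨍ y in ball x r, (1 + ‖y - z‖^2) ^ (s/2))
      = ⨍ y in ball (x - z) r, (1 + ‖y‖^2) ^ (s/2) :=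
    avg_translate (fun w => (1 + ‖w‖^2) ^ (s/2)) z x r
  have h2 : (⨍ y in ball x r, (1 + ‖y - z‖^2) ^ (-(s/2)))
      = ⨍ y in ball (x - z) r, (1 + ‖y‖^2) ^ (-(s/2)) :=
    avg_translate (fun w => (1 + ‖w‖^2) ^ (-(s/2))) z x r
  rw [h1, h2]
  exact (core0 hn hs0 hsn (x - z) hr).trans (le_max_left _ _)


private lemma core' (hn : 2 ≤ n) {s : ℝ} (hs0 : 0 < s) (hsn : s < n) :
    ∃ C : ℝ, 1 ≤ C ∧ ∀ (z x : E) (r : ℝ), 0 < r →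
      (⨍ y in ball x r, (1 + ‖y - z‖^2) ^ (s/2)) *
        (⨍ y in ball x r, (1 + ‖y - z‖^2) ^ (-(s/2))) ≤ C :=
  core hn hs0 hsn

end A2Aux

/-- For `1/2 < μ < 2/3`, every `t ∈ ℝ` and unit vector `e ∈ ℝⁿ` (`n ≥ 2`), the
weight `⟨x+et⟩^{4μ−2} ⟨x−et⟩^{2μ}` belongs to `A₂(ℝⁿ)` with `A₂` constant
bounded independently of `t`.  Here `⟨y⟩^α = (1+‖y‖²)^{α/2}`. -/
theorem mixed_weight_A2_uniform (n : ℕ) (hn : 2 ≤ n) (μ : ℝ)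
    (h1 : 1/2 < μ) (h2 : μ < 2/3)
    (e : EuclideanSpace ℝ (Fin n)) (he : ‖e‖ = 1) :
    ∃ C : ℝ, ∀ (t : ℝ) (x : EuclideanSpace ℝ (Fin n)) (r : ℝ), 0 < r →
      (⨍ y in Metric.ball x r,
          (1 + ‖y + t • e‖^2) ^ ((4*μ - 2)/2) * (1 + ‖y - t • e‖^2) ^ μ) *
        (⨍ y in Metric.ball x r,
          ((1 + ‖y + t • e‖^2) ^ ((4*μ - 2)/2) * (1 + ‖y - t • e‖^2) ^ μ)⁻¹) ≤ C := by
  set s : ℝ := 6*μ - 2 with hsdef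
  have hs0 : 0 < s := by rw [hsdef]; linarith
  have hsn : s < n := by
    have h2n : (2:ℝ) ≤ n := by exact_mod_cast hn
    rw [hsdef]; linarith
  obtain ⟨C, hC1, hC⟩ := core hn hs0 hsn
  refine ⟨C, fun t x r hr => ?_⟩
  set θ : ℝ := (4*μ - 2)/s with hθdef
  have hθ0 : 0 < θ := div_pos (by rw [hsdef] at *; linarith) hs0
  have hθ1 : θ < 1 := by
    rw [hθdef, div_lt_one hs0, hsdef]
    linarith
  set u : EuclideanSpace ℝ (Fin n) → ℝ := fun y => (1 + ‖y + t • e‖^2) ^ (s/2) with hu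
  set v : EuclideanSpace ℝ (Fin n) → ℝ := fun y => (1 + ‖y - t • e‖^2) ^ (s/2) with hv
  set u' : EuclideanSpace ℝ (Fin n) → ℝ := fun y => (1 + ‖y + t • e‖^2) ^ (-(s/2)) with hu'
  set v' : EuclideanSpace ℝ (Fin n) → ℝ := fun y => (1 + ‖y - t • e‖^2) ^ (-(s/2)) with hv'
  have eθ1 : s/2 * θ = (4*μ - 2)/2 := by
    rw [hθdef]
    field_simp
  have eθ2 : s/2 * (1-θ) = μ := by
    rw [hθdef]
    field_simp
    ring
  have hw : ∀ y : EuclideanSpace ℝ (Fin n),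
      (1 + ‖y + t • e‖^2) ^ ((4*μ - 2)/2) * (1 + ‖y - t • e‖^2) ^ μ
        = u y ^ θ * v y ^ (1-θ) := by
    intro y
    rw [hu, hv]
    simp only
    rw [← Real.rpow_mul (by positivity), ← Real.rpow_mul (by positivity), eθ1, eθ2]
  have hw' : ∀ y : EuclideanSpace ℝ (Fin n),
      ((1 + ‖y + t • e‖^2) ^ ((4*μ - 2)/2) * (1 + ‖y - t • e‖^2) ^ μ)⁻¹
        = u' y ^ θ * v' y ^ (1-θ) := by
    intro y
    rw [hu', hv']
    simp only
    rw [show -(s/2) = s/2 * (-1) by ring, Real.rpow_mul (by positivity),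
      Real.rpow_mul (by positivity), Real.rpow_neg_one, Real.rpow_neg_one,
      ← Real.inv_rpow (by positivity), ← Real.inv_rpow (by positivity),
      ← Real.rpow_mul (by positivity), ← Real.rpow_mul (by positivity)]
    rw [show s/2 * θ = (4*μ-2)/2 from eθ1, show s/2 * (1-θ) = μ from eθ2]
    rw [Real.inv_rpow (by positivity), Real.inv_rpow (by positivity), ← mul_inv]
  simp only [hw']
  simp only [hw]
  have cu : Continuous u := by
    rw [hu]
    have := contW (-(t • e)) (s/2)
    simpa [sub_neg_eq_add] using this
  have cv : Continuous v := contW (t • e) (s/2)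
  have cu' : Continuous u' := by
    rw [hu']
    have := contW (-(t • e)) (-(s/2))
    simpa [sub_neg_eq_add] using this
  have cv' : Continuous v' := contW (t • e) (-(s/2))
  have u0 : ∀ y, 0 ≤ u y := fun y => by rw [hu]; positivity
  have v0 : ∀ y, 0 ≤ v y := fun y => by rw [hv]; positivity
  have u'0 : ∀ y, 0 ≤ u' y := fun y => by rw [hu']; positivity
  have v'0 : ∀ y, 0 ≤ v' y := fun y => by rw [hv']; positivity
  have au0 : 0 ≤ ⨍ y in ball x r, u y := avg_nonneg' u0 x r
  have av0 : 0 ≤ ⨍ y in ball x r, v y := avg_nonneg' v0 x r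
  have au'0 : 0 ≤ ⨍ y in ball x r, u' y := avg_nonneg' u'0 x r
  have av'0 : 0 ≤ ⨍ y in ball x r, v' y := avg_nonneg' v'0 x r
  have hHol1 := avg_holder (x := x) hr cu cv u0 v0 hθ0 hθ1
  have hHol2 := avg_holder (x := x) hr cu' cv' u'0 v'0 hθ0 hθ1
  have hCu : (⨍ y in ball x r, u y) * (⨍ y in ball x r, u' y) ≤ C := by
    have h := hC (-(t • e)) x r hr
    have e1 : (⨍ y in ball x r, (1 + ‖y - -(t • e)‖^2) ^ (s/2)) = ⨍ y in ball x r, u y := by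
      rw [hu]; simp [sub_neg_eq_add]
    have e2 : (⨍ y in ball x r, (1 + ‖y - -(t • e)‖^2) ^ (-(s/2))) =
        ⨍ y in ball x r, u' y := by
      rw [hu']; simp [sub_neg_eq_add]
    rwa [e1, e2] at h
  have hCv : (⨍ y in ball x r, v y) * (⨍ y in ball x r, v' y) ≤ C := hC (t • e) x r hr
  have hC0 : (0:ℝ) < C := by linarith
  calc (⨍ y in ball x r, u y ^ θ * v y ^ (1-θ)) * (⨍ y in ball x r, u' y ^ θ * v' y ^ (1-θ))
      ≤ ((⨍ y in ball x r, u y) ^ θ * (⨍ y in ball x r, v y) ^ (1-θ)) *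
        ((⨍ y in ball x r, u' y) ^ θ * (⨍ y in ball x r, v' y) ^ (1-θ)) :=
        mul_le_mul hHol1 hHol2
          (avg_nonneg' (fun y => mul_nonneg (Real.rpow_nonneg (u'0 y) _)
            (Real.rpow_nonneg (v'0 y) _)) x r)
          (mul_nonneg (Real.rpow_nonneg au0 _) (Real.rpow_nonneg av0 _))
    _ = ((⨍ y in ball x r, u y) * (⨍ y in ball x r, u' y)) ^ θ *
        ((⨍ y in ball x r, v y) * (⨍ y in ball x r, v' y)) ^ (1-θ) := by
        rw [Real.mul_rpow au0 au'0, Real.mul_rpow av0 av'0]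
        ring
    _ ≤ C ^ θ * C ^ (1-θ) :=
        mul_le_mul (Real.rpow_le_rpow (mul_nonneg au0 au'0) hCu hθ0.le)
          (Real.rpow_le_rpow (mul_nonneg av0 av'0) hCv (by linarith))
          (Real.rpow_nonneg (mul_nonneg av0 av'0) _)
          (Real.rpow_nonneg hC0.le _)
    _ = C := by
        rw [← Real.rpow_add hC0]
        norm_num
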